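/- For d = p + q ≥ 3 and half-integer ℓ ≥ 1/2, the bracket relations of the generalized conformal pseudo-Galilean algebra Gal_ℓ(p,q) — on generators H, D, C, E_{ij} (i<j), P_{n,i} (0 ≤ n ≤ 2ℓ, 1 ≤ i ≤ d), M with [D,H]=2H, [D,C]=−2C, [C,H]=D, [H,P_{n,i}]=−nP_{n−1,i}, [D,P_{n,i}]=2(ℓ−n)P_{n,i}, [C,P_{n,i}]=(2ℓ−n)P_{n+1,i}, [E_{ij},P_{n,k}]=g_{ik}P_{n,j}−g_{jk}P_{n,i}, [E_{ij},E_{kl}]=g_{ik}E_{jl}+g_{jl}E_{ik}−g_{il}E_{jk}−g_{jk}E_{il}, [P_{m,i},P_{n,j}]=g_{ij}δ_{m+n,2ℓ}(−1)^{m+ℓ+1/2}(2ℓ−m)! m! M, and M central — satisfy the Jacobi identity, hence define a Lie algebra of dimension 4 + d(d−1)/2 + (2ℓ+1)d. -/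

import Mathlib

/-- Index type for a basis of `Gal_ℓ(p,q)` with `ℓ = t + 1/2`, `d = p + q`:
the `sl(2,ℝ)` generators `H, D, C`, the central element `M`, the generators
`E_{ij}` (`i < j`) of `so(p,q)`, and the `P_{n,i}` (`0 ≤ n ≤ 2ℓ = 2t+1`). -/
def GalIdx (d t : ℕ) : Type :=
  (Fin 3 ⊕ Unit) ⊕ ({pr : Fin d × Fin d // pr.1 < pr.2} ⊕ (Fin (2 * t + 2) × Fin d))

instance (d t : ℕ) : Fintype (GalIdx d t) :=
  inferInstanceAs (Fintype ((Fin 3 ⊕ Unit) ⊕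
    ({pr : Fin d × Fin d // pr.1 < pr.2} ⊕ (Fin (2 * t + 2) × Fin d))))


open Matrix Finset

namespace Gal

variable {d t p : ℕ}

abbrev Mid (d t : ℕ) := Fin (2*t+2) × Fin d
abbrev Idx (d t : ℕ) := Unit ⊕ (Mid d t ⊕ Unit)
abbrev Mx (d t : ℕ) := Matrix (Idx d t) (Idx d t) ℝ

instance : LieRing (Mx d t) := LieRing.ofAssociativeRing
instance : LieAlgebra ℝ (Mx d t) := LieAlgebra.ofAssociativeAlgebra

def top : Idx d t := Sum.inl ()
def bot : Idx d t := Sum.inr (Sum.inr ())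
def md (x : Mid d t) : Idx d t := Sum.inr (Sum.inl x)

@[simp] lemma md_ne_top (x : Mid d t) : md x ≠ top := by simp [md, top]
@[simp] lemma md_ne_bot (x : Mid d t) : md x ≠ bot := by simp [md, bot]
@[simp] lemma top_ne_md (x : Mid d t) : top ≠ md x := by simp [md, top]
@[simp] lemma bot_ne_md (x : Mid d t) : bot ≠ md x := by simp [md, bot]
@[simp] lemma bot_ne_top : (bot : Idx d t) ≠ top := by simp [bot, top]
@[simp] lemma top_ne_bot : (top : Idx d t) ≠ bot := by simp [bot, top]
@[simp] lemma md_eq_md (x y : Mid d t) : md x = md y ↔ x = y := by simp [md]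

def E (a b : Idx d t) : Mx d t := single a b 1

lemma E_mul_E (a b c e : Idx d t) :
    E a b * E c e = if b = c then E a e else 0 := by
  split_ifs with h
  · subst h
    have := Matrix.single_mul_single_same (c := (1:ℝ)) a b e 1
    simpa [E] using this
  · exact Matrix.single_mul_single_of_ne (c := (1:ℝ)) a b c h 1

/-- generic `sl₂`-type operator acting on the middle block -/
def T (f : Fin (2*t+2) → ℝ) (τ : Fin (2*t+2) → Fin (2*t+2)) : Mx d t :=
  ∑ n : Fin (2*t+2), ∑ i : Fin d, f n • E (md (τ n, i)) (md (n, i))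

lemma T_def (f : Fin (2*t+2) → ℝ) (τ : Fin (2*t+2) → Fin (2*t+2)) :
    T (d := d) f τ = ∑ n : Fin (2*t+2), ∑ i : Fin d, f n • E (md (τ n, i)) (md (n, i)) := rfl

/-- generic `so`-type operator -/
def F (a b : Fin d) : Mx d t := ∑ n : Fin (2*t+2), E (md (n,a)) (md (n,b))

lemma F_def (a b : Fin d) :
    F (t := t) a b = ∑ n : Fin (2*t+2), E (md (n,a)) (md (n,b)) := rfl

lemma T_mul_E (f : Fin (2*t+2) → ℝ) (τ : Fin (2*t+2) → Fin (2*t+2))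
    (m : Fin (2*t+2)) (j : Fin d) (w : Idx d t) :
    T f τ * E (md (m, j)) w = f m • E (md (τ m, j)) w := by
  rw [T_def, Finset.sum_mul, Finset.sum_eq_single m]
  · rw [Finset.sum_mul, Finset.sum_eq_single j]
    · rw [smul_mul_assoc, E_mul_E]; simp
    · intro i _ hi
      rw [smul_mul_assoc, E_mul_E]
      have : md (m, i) ≠ md (m, j) := by simp [hi]
      simp [this]
    · simp
  · intro n _ hn
    rw [Finset.sum_mul]
    apply Finset.sum_eq_zero
    intro i _
    rw [smul_mul_assoc, E_mul_E]
    have : md (n, i) ≠ md (m, j) := by simp [hn]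
    simp [this]
  · simp

lemma T_mul_E_top (f : Fin (2*t+2) → ℝ) (τ : Fin (2*t+2) → Fin (2*t+2))
    (w : Idx d t) : T f τ * E top w = 0 := by
  rw [T_def, Finset.sum_mul]
  apply Finset.sum_eq_zero
  intro n _
  rw [Finset.sum_mul]
  apply Finset.sum_eq_zero
  intro i _
  rw [smul_mul_assoc, E_mul_E]
  simp

lemma E_mul_T (f : Fin (2*t+2) → ℝ) (τ : Fin (2*t+2) → Fin (2*t+2))
    (a : Idx d t) (m : Fin (2*t+2)) (j : Fin d) :
    E a (md (m, j)) * T f τ =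
      ∑ n : Fin (2*t+2), if τ n = m then f n • E a (md (n, j)) else 0 := by
  rw [T_def, Finset.mul_sum]
  apply Finset.sum_congr rfl
  intro n _
  rw [Finset.mul_sum, Finset.sum_eq_single j]
  · rw [mul_smul_comm, E_mul_E]
    by_cases h : τ n = m
    · simp [h]
    · have : md (m, j) ≠ md (τ n, j) := by simp [Ne.symm h]
      simp [this, h]
  · intro i _ hi
    rw [mul_smul_comm, E_mul_E]
    have : md (m, j) ≠ md (τ n, i) := by simp [Ne.symm hi]
    simp [this]
  · simp

lemma E_bot_mul_T (f : Fin (2*t+2) → ℝ) (τ : Fin (2*t+2) → Fin (2*t+2))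
    (a : Idx d t) : E a bot * T f τ = 0 := by
  rw [T_def, Finset.mul_sum]
  apply Finset.sum_eq_zero
  intro n _
  rw [Finset.mul_sum]
  apply Finset.sum_eq_zero
  intro i _
  rw [mul_smul_comm, E_mul_E]
  simp

lemma T_mul_T (f f' : Fin (2*t+2) → ℝ) (τ τ' : Fin (2*t+2) → Fin (2*t+2)) :
    T f τ * T f' τ' = T (d := d) (fun n => f (τ' n) * f' n) (τ ∘ τ') := by
  conv_lhs => rw [T_def f' τ']
  rw [Finset.mul_sum, T_def (fun n => f (τ' n) * f' n) (τ ∘ τ')]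
  apply Finset.sum_congr rfl
  intro n _
  rw [Finset.mul_sum]
  apply Finset.sum_congr rfl
  intro i _
  rw [mul_smul_comm, T_mul_E, smul_smul, mul_comm]
  rfl

lemma T_mul_F (f : Fin (2*t+2) → ℝ) (τ : Fin (2*t+2) → Fin (2*t+2)) (a b : Fin d) :
    T f τ * F a b = ∑ n : Fin (2*t+2), f n • E (md (τ n, a)) (md (n, b)) := by
  rw [F_def, Finset.mul_sum]
  apply Finset.sum_congr rfl
  intro n _
  rw [T_mul_E]

lemma E_mul_F (a b : Fin d) (m : Fin (2*t+2)) (k : Fin d) (w : Idx d t) :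
    E w (md (m, k)) * F a b = if k = a then E w (md (m, b)) else 0 := by
  rw [F_def, Finset.mul_sum, Finset.sum_eq_single m]
  · rw [E_mul_E]
    by_cases h : k = a
    · simp [h]
    · have : md (m, k) ≠ md (m, a) := by simp [h]
      simp [this, h]
  · intro n _ hn
    rw [E_mul_E]
    have : md (m, k) ≠ md (n, a) := by simp [Ne.symm hn]
    simp [this]
  · simp

lemma E_bot_mul_F (a b : Fin d) (w : Idx d t) : E w bot * F a b = 0 := by
  rw [F_def, Finset.mul_sum]
  apply Finset.sum_eq_zero
  intro n _
  rw [E_mul_E]; simp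

lemma F_mul_E (a b : Fin d) (m : Fin (2*t+2)) (k : Fin d) (w : Idx d t) :
    F a b * E (md (m, k)) w = if b = k then E (md (m, a)) w else 0 := by
  rw [F_def, Finset.sum_mul, Finset.sum_eq_single m]
  · rw [E_mul_E]
    by_cases h : b = k
    · simp [h]
    · have : md (m, b) ≠ md (m, k) := by simp [h]
      simp [this, h]
  · intro n _ hn
    rw [E_mul_E]
    have : md (n, b) ≠ md (m, k) := by simp [hn]
    simp [this]
  · simp

lemma F_mul_E_top (a b : Fin d) (w : Idx d t) : F a b * E top w = 0 := by
  rw [F_def, Finset.sum_mul]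
  apply Finset.sum_eq_zero
  intro n _
  rw [E_mul_E]; simp

lemma F_mul_T (f : Fin (2*t+2) → ℝ) (τ : Fin (2*t+2) → Fin (2*t+2)) (a b : Fin d) :
    F a b * T f τ = ∑ n : Fin (2*t+2), f n • E (md (τ n, a)) (md (n, b)) := by
  rw [F_def, Finset.sum_mul]
  rw [Finset.sum_congr rfl fun n (_ : n ∈ univ) => E_mul_T f τ (md (n,a)) n b]
  rw [Finset.sum_comm]
  apply Finset.sum_congr rfl
  intro m _
  rw [Finset.sum_eq_single (τ m)]
  · simp
  · intro n _ hn; simp [Ne.symm hn]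
  · simp

lemma T_comm_F (f : Fin (2*t+2) → ℝ) (τ : Fin (2*t+2) → Fin (2*t+2)) (a b : Fin d) :
    T f τ * F a b = F a b * T f τ := by rw [T_mul_F, F_mul_T]

lemma F_mul_F (a b c e : Fin d) :
    F a b * F c e = if b = c then F (d := d) (t := t) a e else 0 := by
  conv_lhs => rw [F_def a b]
  rw [Finset.sum_mul]
  rw [Finset.sum_congr rfl fun n (_ : n ∈ univ) => E_mul_F c e n b (md (n,a))]
  split_ifs with h
  · rw [F_def]
  · simp


/-! ### The generators -/

def gsign (p : ℕ) (i : Fin d) : ℝ := if (i:ℕ) < p then 1 else -1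

lemma gsign_ne_zero (i : Fin d) : gsign p i ≠ 0 := by
  rw [gsign]; split_ifs <;> norm_num

def fH : Fin (2*t+2) → ℝ := fun n => -((n:ℕ) : ℝ)
def fD : Fin (2*t+2) → ℝ := fun n => (2*t+1:ℝ) - 2*((n:ℕ) : ℝ)
def fC : Fin (2*t+2) → ℝ := fun n => (2*t+1:ℝ) - ((n:ℕ) : ℝ)
def prF : Fin (2*t+2) → Fin (2*t+2) := fun n => ⟨n.1 - 1, by omega⟩
def scF : Fin (2*t+2) → Fin (2*t+2) :=
  fun n => ⟨min (n.1+1) (2*t+1), by omega⟩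

def MH : Mx d t := T fH prF
def MD : Mx d t := T fD id
def MC : Mx d t := T fC scF
def MM : Mx d t := E top bot
def col (u : Fin (2*t+2)) (i : Fin d) : Mx d t := E (md (u,i)) bot
def row (u : Fin (2*t+2)) (i : Fin d) : Mx d t := E top (md (u,i))
noncomputable def cP (t n : ℕ) : ℝ := (-1:ℝ)^(n+t+1) * (2*t+1-n).factorial * n.factorial / 2
noncomputable def MP (p : ℕ) (n : ℕ) (i : Fin d) : Mx d t :=
  if h : n ≤ 2*t+1 then
    col ⟨n, by omega⟩ i + (cP t n * gsign p i) • row ⟨2*t+1-n, by omega⟩ i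
  else 0
def ME (p : ℕ) (i j : Fin d) : Mx d t := gsign p i • F j i - gsign p j • F i j

/-! ### T-calculus helper lemmas -/

lemma T_sub_eq_T (f f' h : Fin (2*t+2) → ℝ) (σ σ' ρ : Fin (2*t+2) → Fin (2*t+2))
    (H : ∀ n, f n - f' n = h n)
    (H1 : ∀ n, f n ≠ 0 → σ n = ρ n) (H2 : ∀ n, f' n ≠ 0 → σ' n = ρ n) :
    T (d := d) f σ - T f' σ' = T h ρ := by
  rw [T_def, T_def, T_def, ← Finset.sum_sub_distrib]
  apply Finset.sum_congr rfl
  intro n _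
  rw [← Finset.sum_sub_distrib]
  apply Finset.sum_congr rfl
  intro i _
  by_cases h1 : f n = 0
  · by_cases h2 : f' n = 0
    · rw [h1, h2, ← H n, h1, h2]; simp
    · rw [H2 n h2, h1, ← H n, h1]; simp [sub_smul]
  · by_cases h2 : f' n = 0
    · rw [H1 n h1, h2, ← H n, h2]; simp [sub_smul]
    · rw [H1 n h1, H2 n h2, ← H n, sub_smul]

lemma smul_T (a : ℝ) (f : Fin (2*t+2) → ℝ) (τ : Fin (2*t+2) → Fin (2*t+2)) :
    a • T (d := d) f τ = T (fun n => a * f n) τ := by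
  rw [T_def, T_def, Finset.smul_sum]
  apply Finset.sum_congr rfl
  intro n _
  rw [Finset.smul_sum]
  apply Finset.sum_congr rfl
  intro i _
  rw [smul_smul]

/-! ### sl2 relations -/

lemma lie_MD_MH : ⁅(MD : Mx d t), (MH : Mx d t)⁆ = (2:ℝ) • MH := by
  rw [Ring.lie_def, MD, MH, T_mul_T, T_mul_T, smul_T]
  apply T_sub_eq_T
  · intro n
    show fD (prF n) * fH n - fH n * fD n = 2 * fH n
    rcases Nat.eq_zero_or_pos n.1 with h | h
    · simp [fH, fD, prF, h]
    · have : ((prF n : Fin (2*t+2)) : ℕ) = n.1 - 1 := rfl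
      simp only [fH, fD, this]
      have hc : ((n.1 - 1 : ℕ) : ℝ) = (n.1 : ℝ) - 1 := by
        push_cast [Nat.cast_sub h]; ring
      rw [hc]; ring
  · intro n _; rfl
  · intro n _; rfl

lemma lie_MD_MC : ⁅(MD : Mx d t), (MC : Mx d t)⁆ = (-2:ℝ) • MC := by
  rw [Ring.lie_def, MD, MC, T_mul_T, T_mul_T, smul_T]
  apply T_sub_eq_T
  · intro n
    show fD (scF n) * fC n - fC n * fD n = (-2) * fC n
    rcases Nat.lt_or_ge n.1 (2*t+1) with h | h
    · have : ((scF n : Fin (2*t+2)) : ℕ) = n.1 + 1 := by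
        show min (n.1+1) (2*t+1) = n.1 + 1; omega
      simp only [fC, fD, this]
      push_cast; ring
    · have hn : n.1 = 2*t+1 := by have := n.isLt; omega
      have h2 : fC n = 0 := by
        show (2*t+1:ℝ) - ((n.1 : ℕ) : ℝ) = 0
        rw [hn]; push_cast; ring
      show fD (scF n) * fC n - fC n * fD n = (-2) * fC n
      rw [h2]; ring
  · intro n _; rfl
  · intro n _; rfl

lemma lie_MC_MH : ⁅(MC : Mx d t), (MH : Mx d t)⁆ = MD := by
  rw [Ring.lie_def, MC, MH, MD, T_mul_T, T_mul_T]
  apply T_sub_eq_T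
  · intro n
    show fC (prF n) * fH n - fH (scF n) * fC n = fD n
    have hlt := n.isLt
    have e1 : fC (prF n) = (2*t+1:ℝ) - ((n.1 - 1 : ℕ):ℝ) := rfl
    have e2 : fH (scF n) = -(((min (n.1+1) (2*t+1)) : ℕ):ℝ) := rfl
    have e3 : fH n = -((n.1:ℕ):ℝ) := rfl
    have e4 : fC n = (2*t+1:ℝ) - ((n.1:ℕ):ℝ) := rfl
    have e5 : fD n = (2*t+1:ℝ) - 2*((n.1:ℕ):ℝ) := rfl
    rw [e1, e2, e3, e4, e5]
    rcases Nat.eq_zero_or_pos n.1 with h0 | h0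
    · rw [h0]
      have hm : min (0+1) (2*t+1) = 1 := by omega
      rw [hm]
      push_cast; ring
    · rcases Nat.lt_or_ge n.1 (2*t+1) with h1 | h1
      · have hm : min (n.1+1) (2*t+1) = n.1+1 := by omega
        rw [hm]
        have hc : ((n.1 - 1 : ℕ) : ℝ) = (n.1 : ℝ) - 1 := by
          push_cast [Nat.cast_sub h0]; ring
        rw [hc]; push_cast; ring
      · have hn : n.1 = 2*t+1 := by omega
        rw [hn]
        have hm : min (2*t+1+1) (2*t+1) = 2*t+1 := by omega
        rw [hm, show 2*t+1-1 = 2*t from rfl]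
        push_cast; ring
  · intro n hf
    -- σ = scF ∘ prF, need = id when fC (prF n) * fH n ≠ 0
    have hH : (n.1 : ℝ) ≠ 0 := by
      intro hc; apply hf; show fC (prF n) * fH n = 0; simp [fH, hc]
    have h0 : 0 < n.1 := Nat.pos_of_ne_zero (fun hc => hH (by rw [hc]; simp))
    show scF (prF n) = n
    have := n.isLt
    apply Fin.ext
    show min ((n.1 - 1)+1) (2*t+1) = n.1
    omega
  · intro n hf
    have hC : fC n ≠ 0 := fun hc => hf (by show fH (scF n) * fC n = 0; rw [hc, mul_zero])
    have h1 : n.1 < 2*t+1 := by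
      rcases Nat.lt_or_ge n.1 (2*t+1) with h | h
      · exact h
      · exfalso; apply hC
        have hn : n.1 = 2*t+1 := by have := n.isLt; omega
        show (2*t+1:ℝ) - ((n.1 : ℕ) : ℝ) = 0
        rw [hn]; push_cast; ring
    show prF (scF n) = n
    apply Fin.ext
    show (min (n.1+1) (2*t+1)) - 1 = n.1
    omega

/-! ### commutation of sl2 with so -/

lemma lie_T_F (f : Fin (2*t+2) → ℝ) (τ : Fin (2*t+2) → Fin (2*t+2)) (a b : Fin d) :
    ⁅(T f τ : Mx d t), (F a b : Mx d t)⁆ = 0 := by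
  rw [Ring.lie_def, T_comm_F, sub_self]

lemma lie_T_ME (f : Fin (2*t+2) → ℝ) (τ : Fin (2*t+2) → Fin (2*t+2)) (i j : Fin d) :
    ⁅(T f τ : Mx d t), (ME p i j : Mx d t)⁆ = 0 := by
  rw [ME, lie_sub, lie_smul, lie_smul, lie_T_F, lie_T_F]; simp

lemma lie_F_F (a b c e : Fin d) : ⁅(F a b : Mx d t), (F c e : Mx d t)⁆ =
    (if b = c then F a e else 0) - (if e = a then F c b else 0) := by
  rw [Ring.lie_def, F_mul_F, F_mul_F]

lemma lie_ME_ME (i j k l : Fin d) :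
    ⁅(ME p i j : Mx d t), (ME p k l : Mx d t)⁆ =
      (if i = k then gsign p i else 0) • ME p j l
      + (if j = l then gsign p j else 0) • ME p i k
      - (if i = l then gsign p i else 0) • ME p j k
      - (if j = k then gsign p j else 0) • ME p i l := by
  simp only [ME, lie_sub, sub_lie, lie_smul, smul_lie, lie_F_F, smul_sub, smul_smul]
  by_cases hik : i = k <;> by_cases hjl : j = l <;> by_cases hil : i = l <;>
    by_cases hjk : j = k <;>
    (try subst hik) <;> (try subst hjl) <;> (try subst hil) <;> (try subst hjk) <;>
    split_ifs <;> simp_all <;> module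

/-! ### block products with col/row -/

lemma T_mul_col (f : Fin (2*t+2) → ℝ) (τ : Fin (2*t+2) → Fin (2*t+2))
    (u : Fin (2*t+2)) (i : Fin d) :
    T f τ * col u i = f u • col (τ u) i := by
  rw [col, col, T_mul_E]

lemma T_mul_row (f : Fin (2*t+2) → ℝ) (τ : Fin (2*t+2) → Fin (2*t+2))
    (u : Fin (2*t+2)) (i : Fin d) : T f τ * row u i = 0 := by
  rw [row, T_mul_E_top]

lemma col_mul_T (f : Fin (2*t+2) → ℝ) (τ : Fin (2*t+2) → Fin (2*t+2))
    (u : Fin (2*t+2)) (i : Fin d) : col u i * T f τ = 0 := by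
  rw [col, E_bot_mul_T]

lemma row_mul_MD (u : Fin (2*t+2)) (i : Fin d) :
    row u i * (MD : Mx d t) = fD u • row u i := by
  rw [row, MD, E_mul_T, Finset.sum_eq_single u]
  · simp [row]
  · intro n _ hn; simp [hn]
  · simp

lemma row_mul_MH_top (u : Fin (2*t+2)) (i : Fin d) (hu : u.1 = 2*t+1) :
    row u i * (MH : Mx d t) = 0 := by
  rw [row, MH, E_mul_T]
  apply Finset.sum_eq_zero
  intro n _
  have : prF n ≠ u := by
    intro hc
    have h1 : n.1 - 1 = u.1 := congrArg Fin.val hc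
    have := n.isLt
    omega
  simp [this]

lemma row_mul_MH' (u : Fin (2*t+2)) (i : Fin d) (hu : u.1 < 2*t+1) :
    row u i * (MH : Mx d t) =
      (-(u.1+1 : ℝ)) • row ⟨u.1+1, by omega⟩ i := by
  rw [row, MH, E_mul_T, Finset.sum_eq_single ⟨u.1+1, by omega⟩]
  · have h1 : prF (⟨u.1+1, by omega⟩ : Fin (2*t+2)) = u := by
      apply Fin.ext; show u.1 + 1 - 1 = u.1; omega
    rw [if_pos h1]
    have h2 : fH (⟨u.1+1, by omega⟩ : Fin (2*t+2)) = -(u.1+1 : ℝ) := by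
      show -((u.1+1 : ℕ) : ℝ) = _
      push_cast; ring
    rw [h2, row]
  · intro n _ hn
    by_cases hc : prF n = u
    · have h1 : n.1 - 1 = u.1 := congrArg Fin.val hc
      have h0 : n.1 = 0 := by
        rcases Nat.eq_zero_or_pos n.1 with h | h
        · exact h
        · exfalso; apply hn; apply Fin.ext; show n.1 = u.1+1; omega
      have : fH n = 0 := by show -((n.1 : ℕ) : ℝ) = 0; rw [h0]; simp
      simp [this]
    · simp [hc]
  · simp

lemma row_mul_MC_zero (u : Fin (2*t+2)) (i : Fin d) (hu : u.1 = 0) :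
    row u i * (MC : Mx d t) = 0 := by
  rw [row, MC, E_mul_T]
  apply Finset.sum_eq_zero
  intro n _
  have : scF n ≠ u := by
    intro hc
    have h1 : min (n.1+1) (2*t+1) = u.1 := congrArg Fin.val hc
    omega
  simp [this]

lemma row_mul_MC' (u : Fin (2*t+2)) (i : Fin d) (hu : 1 ≤ u.1) :
    row u i * (MC : Mx d t) =
      ((2*t+1 : ℝ) - ((u.1 - 1 : ℕ) : ℝ)) • row ⟨u.1-1, by omega⟩ i := by
  rw [row, MC, E_mul_T, Finset.sum_eq_single ⟨u.1-1, by omega⟩]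
  · have hlt := u.isLt
    have h1 : scF (⟨u.1-1, by omega⟩ : Fin (2*t+2)) = u := by
      apply Fin.ext; show min (u.1 - 1 + 1) (2*t+1) = u.1; omega
    rw [if_pos h1]
    rfl
  · intro n _ hn
    by_cases hc : scF n = u
    · have h1 : min (n.1+1) (2*t+1) = u.1 := congrArg Fin.val hc
      have hn1 : n.1 = 2*t+1 := by
        rcases Nat.lt_or_ge n.1 (2*t+1) with h | h
        · exfalso; apply hn; apply Fin.ext; show n.1 = u.1 - 1; omega
        · have := n.isLt; omega
      have : fC n = 0 := by
        show (2*t+1:ℝ) - ((n.1 : ℕ) : ℝ) = 0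
        rw [hn1]; push_cast; ring
      simp [this]
    · simp [hc]
  · simp

lemma F_mul_col (a b : Fin d) (u : Fin (2*t+2)) (k : Fin d) :
    F a b * col u k = if b = k then col u a else 0 := by
  rw [col, F_mul_E]
  split_ifs <;> rfl

lemma col_mul_F (u : Fin (2*t+2)) (k a b : Fin d) : col u k * F a b = 0 := by
  rw [col, E_bot_mul_F]

lemma row_mul_F (u : Fin (2*t+2)) (k a b : Fin d) :
    row u k * F a b = if k = a then row u b else 0 := by
  rw [row, E_mul_F]
  split_ifs <;> rfl

lemma F_mul_row (a b : Fin d) (u : Fin (2*t+2)) (i : Fin d) :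
    F a b * row u i = 0 := by
  rw [row, F_mul_E_top]

lemma col_mul_col (u : Fin (2*t+2)) (i : Fin d) (v : Fin (2*t+2)) (j : Fin d) :
    col u i * col v j = 0 := by
  rw [col, col, E_mul_E]; simp

lemma col_mul_row (u : Fin (2*t+2)) (i : Fin d) (v : Fin (2*t+2)) (j : Fin d) :
    col u i * row v j = 0 := by
  rw [col, row, E_mul_E]; simp

lemma row_mul_row (u : Fin (2*t+2)) (i : Fin d) (v : Fin (2*t+2)) (j : Fin d) :
    row u i * row v j = 0 := by
  rw [row, row, E_mul_E]; simp

lemma row_mul_col (u : Fin (2*t+2)) (i : Fin d) (v : Fin (2*t+2)) (j : Fin d) :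
    row u i * col v j = if u = v ∧ i = j then MM else 0 := by
  rw [row, col, E_mul_E, MM]
  by_cases h : ((u,i) : Mid d t) = (v,j)
  · rw [if_pos (by simp [h]), if_pos]
    · rcases Prod.mk.injEq .. ▸ h with ⟨h1, h2⟩
      exact ⟨h1, h2⟩
  · rw [if_neg (by simp [h]), if_neg]
    intro hc
    exact h (by rw [hc.1, hc.2])

/-! ### coefficient identities -/

set_option maxHeartbeats 1000000

lemma ncs (a b : ℕ) (h : b ≤ a) : ((a - b : ℕ) : ℝ) = (a:ℝ) - (b:ℝ) := by
  rw [Nat.cast_sub h]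

lemma cP_succ (n : ℕ) (h1 : 1 ≤ n) (h2 : n ≤ 2*t+1) :
    ((2*t+2-n : ℕ) : ℝ) * cP t n = -((n : ℕ) : ℝ) * cP t (n-1) := by
  obtain ⟨m, rfl⟩ : ∃ m, n = m + 1 := ⟨n-1, by omega⟩
  have hm : m ≤ 2*t := by omega
  rw [show m+1-1 = m from by omega, show 2*t+2-(m+1) = 2*t+1-m from by omega]
  rw [cP, cP]
  rw [show m+1+t+1 = (m+t+1)+1 from by omega, pow_succ]
  rw [show 2*t+1-(m+1) = 2*t-m from by omega]
  rw [show 2*t+1-m = (2*t-m)+1 from by omega, Nat.factorial_succ]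
  rw [Nat.factorial_succ]
  push_cast
  ring

lemma cP_sub (m : ℕ) (hm : m ≤ 2*t+1) :
    cP t m - cP t (2*t+1-m) =
      (-1:ℝ)^(m+t+1) * ((2*t+1-m).factorial : ℝ) * (m.factorial : ℝ) := by
  have hA : (-1:ℝ)^(m+t+1) * (-1:ℝ)^(m+t+1) = 1 := by
    rw [← pow_add]; exact Even.neg_one_pow ⟨m+t+1, by ring⟩
  have hA0 : (-1:ℝ)^(m+t+1) ≠ 0 := by positivity
  have hAB : (-1:ℝ)^(m+t+1) * (-1:ℝ)^(2*t+1-m+t+1) = -1 := by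
    rw [← pow_add, show m+t+1+(2*t+1-m+t+1) = 2*(2*t+1)+1 from by omega]
    exact Odd.neg_one_pow ⟨2*t+1, by ring⟩
  have hB : (-1:ℝ)^(2*t+1-m+t+1) = -(-1:ℝ)^(m+t+1) := by
    apply mul_left_cancel₀ hA0
    rw [hAB, mul_neg, hA]
  rw [cP, cP, hB, show 2*t+1-(2*t+1-m) = m from by omega]
  ring

/-! ### brackets with the P generators -/

lemma MP_eq (n : ℕ) (h : n ≤ 2*t+1) (i : Fin d) :
    MP p n i = col ⟨n, by omega⟩ i
      + (cP t n * gsign p i) • (row ⟨2*t+1-n, by omega⟩ i : Mx d t) :=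
  dif_pos h

lemma MP_zero (n : ℕ) (h : 2*t+1 < n) (i : Fin d) : (MP p n i : Mx d t) = 0 :=
  dif_neg (by omega)

lemma lie_MH_MP (n : ℕ) (h : n ≤ 2*t+1) (i : Fin d) :
    ⁅(MH : Mx d t), (MP p n i : Mx d t)⁆ = (-(n:ℝ)) • MP p (n-1) i := by
  rcases Nat.eq_zero_or_pos n with h0 | h0
  · subst h0
    rw [MP_eq 0 (by omega), Ring.lie_def]
    rw [mul_add, add_mul, mul_smul_comm, smul_mul_assoc]
    rw [MH, T_mul_col, T_mul_row, col_mul_T]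
    rw [show T fH prF = (MH : Mx d t) from rfl]
    rw [row_mul_MH_top _ _ (by show 2*t+1-0 = 2*t+1; omega)]
    have : fH (⟨0, by omega⟩ : Fin (2*t+2)) = 0 := by
      show -(((0:ℕ)) : ℝ) = 0; simp
    rw [this]
    simp
  · rw [MP_eq n h, MP_eq (n-1) (by omega), Ring.lie_def]
    rw [mul_add, add_mul, mul_smul_comm, smul_mul_assoc]
    rw [MH, T_mul_col, T_mul_row, col_mul_T]
    rw [show T fH prF = (MH : Mx d t) from rfl]
    rw [row_mul_MH' _ _ (by show 2*t+1-n < 2*t+1; omega)]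
    have e1 : fH (⟨n, by omega⟩ : Fin (2*t+2)) = -(n:ℝ) := by
      show -(((n:ℕ)) : ℝ) = _; norm_num
    have e2 : prF (⟨n, by omega⟩ : Fin (2*t+2)) = ⟨n-1, by omega⟩ := rfl
    rw [e1, e2]
    have e3 : (⟨2*t+1-n+1, by omega⟩ : Fin (2*t+2)) = ⟨2*t+1-(n-1), by omega⟩ := by
      apply Fin.ext; show 2*t+1-n+1 = 2*t+1-(n-1); omega
    rw [e3]
    have key := cP_succ (t := t) n h0 h
    have hc : ((2*t+1-n : ℕ) : ℝ) = (2*t+1:ℝ) - n := by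
      rw [ncs _ _ (by omega)]; push_cast; ring
    have hc2 : ((2*t+2-n : ℕ) : ℝ) = (2*t+2:ℝ) - n := by
      rw [ncs _ _ (by omega)]; push_cast; ring
    rw [hc2] at key
    match_scalars
    · ring
    · rw [hc]; linear_combination (gsign p i) * key

lemma lie_MD_MP (n : ℕ) (h : n ≤ 2*t+1) (i : Fin d) :
    ⁅(MD : Mx d t), (MP p n i : Mx d t)⁆ = ((2*t+1:ℝ) - 2*n) • MP p n i := by
  rw [MP_eq n h, Ring.lie_def]
  rw [mul_add, add_mul, mul_smul_comm, smul_mul_assoc]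
  rw [MD, T_mul_col, T_mul_row, col_mul_T]
  rw [show T fD id = (MD : Mx d t) from rfl]
  rw [row_mul_MD]
  have e1 : fD (⟨n, by omega⟩ : Fin (2*t+2)) = (2*t+1:ℝ) - 2*n := by
    show (2*t+1:ℝ) - 2*((n:ℕ):ℝ) = _; norm_num
  have e2 : fD (⟨2*t+1-n, by omega⟩ : Fin (2*t+2)) = (2*n:ℝ) - (2*t+1) := by
    show (2*t+1:ℝ) - 2*(((2*t+1-n:ℕ)):ℝ) = _
    push_cast [Nat.cast_sub (by omega : n ≤ 2*t+1)]
    ring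
  rw [e1, e2]
  have e3 : (id (⟨n, by omega⟩ : Fin (2*t+2))) = (⟨n, by omega⟩ : Fin (2*t+2)) := rfl
  rw [e3]
  match_scalars
  · ring
  · ring

lemma lie_MC_MP (n : ℕ) (h : n ≤ 2*t+1) (i : Fin d) :
    ⁅(MC : Mx d t), (MP p n i : Mx d t)⁆ = ((2*t+1:ℝ) - n) • MP p (n+1) i := by
  rcases Nat.lt_or_ge n (2*t+1) with h1 | h1
  · rw [MP_eq n h, MP_eq (n+1) (by omega), Ring.lie_def]
    rw [mul_add, add_mul, mul_smul_comm, smul_mul_assoc]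
    rw [MC, T_mul_col, T_mul_row, col_mul_T]
    rw [show T fC scF = (MC : Mx d t) from rfl]
    rw [row_mul_MC' _ _ (by show 1 ≤ 2*t+1-n; omega)]
    have e1 : fC (⟨n, by omega⟩ : Fin (2*t+2)) = (2*t+1:ℝ) - n := by
      show (2*t+1:ℝ) - ((n:ℕ):ℝ) = _; norm_num
    have e2 : scF (⟨n, by omega⟩ : Fin (2*t+2)) = ⟨n+1, by omega⟩ := by
      apply Fin.ext; show min (n+1) (2*t+1) = n+1; omega
    rw [e1, e2]
    have e3 : (⟨2*t+1-n-1, by omega⟩ : Fin (2*t+2)) = ⟨2*t+1-(n+1), by omega⟩ := by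
      apply Fin.ext; show 2*t+1-n-1 = 2*t+1-(n+1); omega
    rw [e3]
    have key := cP_succ (t := t) (n+1) (by omega) (by omega)
    rw [show n+1-1 = n from by omega] at key
    have hc2 : ((2*t+2-(n+1) : ℕ) : ℝ) = (2*t+1:ℝ) - n := by
      rw [ncs _ _ (by omega)]; push_cast; ring
    have hc3 : ((2*t+1-n-1 : ℕ) : ℝ) = (2*t:ℝ) - n := by
      rw [ncs _ _ (by omega), ncs _ _ (by omega)]; push_cast; ring
    have hc4 : ((n+1 : ℕ) : ℝ) = (n:ℝ) + 1 := by push_cast; ring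
    have hc5 : ((2*t+1-(n+1) : ℕ) : ℝ) = (2*t:ℝ) - n := by
      rw [ncs _ _ (by omega)]; push_cast; ring
    rw [hc2, hc4] at key
    match_scalars
    · ring
    · rw [hc3]; linear_combination (-(gsign p i)) * key
  · have hn : n = 2*t+1 := by omega
    subst hn
    rw [MP_eq _ (le_refl _), MP_zero _ (by omega), Ring.lie_def]
    rw [mul_add, add_mul, mul_smul_comm, smul_mul_assoc]
    rw [MC, T_mul_col, T_mul_row, col_mul_T]
    rw [show T fC scF = (MC : Mx d t) from rfl]
    rw [row_mul_MC_zero _ _ (by show 2*t+1-(2*t+1) = 0; omega)]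
    have e1 : fC (⟨2*t+1, by omega⟩ : Fin (2*t+2)) = 0 := by
      show (2*t+1:ℝ) - (((2*t+1:ℕ)):ℝ) = 0; push_cast; ring
    rw [e1]
    simp

lemma lie_ME_MP (i j : Fin d) (n : ℕ) (hn : n ≤ 2*t+1) (k : Fin d) :
    ⁅(ME p i j : Mx d t), (MP p n k : Mx d t)⁆ =
      (if k = i then gsign p i else 0) • MP p n j
        - (if k = j then gsign p j else 0) • MP p n i := by
  rw [MP_eq n hn k, MP_eq n hn j, MP_eq n hn i, ME, Ring.lie_def]
  simp only [sub_mul, mul_sub, mul_add, add_mul, smul_mul_assoc, mul_smul_comm,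
    F_mul_col, col_mul_F, row_mul_F, F_mul_row, smul_zero, zero_mul, mul_zero]
  by_cases hki : k = i <;> by_cases hkj : k = j <;>
    (try subst hki) <;> (try subst hkj) <;>
    split_ifs <;> simp_all <;> module

lemma lie_MP_MP (m n : ℕ) (hm : m ≤ 2*t+1) (hn : n ≤ 2*t+1) (i j : Fin d) :
    ⁅(MP p m i : Mx d t), (MP p n j : Mx d t)⁆ =
      (if i = j ∧ m + n = 2*t+1 then
        gsign p i * (-1:ℝ)^(m+t+1) * ((2*t+1-m).factorial : ℝ) * (m.factorial : ℝ)
      else 0) • MM := by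
  rw [MP_eq m hm, MP_eq n hn, Ring.lie_def]
  simp only [mul_add, add_mul, smul_mul_assoc, mul_smul_comm,
    col_mul_col, col_mul_row, row_mul_row, row_mul_col, smul_zero, add_zero, zero_add,
    zero_sub, sub_zero, zero_mul, mul_zero]
  by_cases hij : i = j
  · subst hij
    by_cases hmn : m + n = 2*t+1
    · have c1 : ((⟨2*t+1-m, by omega⟩ : Fin (2*t+2)) = ⟨n, by omega⟩ ∧ i = i) := by
        refine ⟨Fin.ext ?_, rfl⟩; show 2*t+1-m = n; omega
      have c2 : ((⟨2*t+1-n, by omega⟩ : Fin (2*t+2)) = ⟨m, by omega⟩ ∧ i = i) := by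
        refine ⟨Fin.ext ?_, rfl⟩; show 2*t+1-n = m; omega
      rw [if_pos c1, if_pos c2, if_pos ⟨rfl, hmn⟩]
      have hsub := cP_sub (t := t) m hm
      have hnn : n = 2*t+1-m := by omega
      subst hnn
      match_scalars
      linear_combination (gsign p i) * hsub
    · have c1 : ¬((⟨2*t+1-m, by omega⟩ : Fin (2*t+2)) = ⟨n, by omega⟩ ∧ i = i) := by
        rintro ⟨h1, -⟩
        have := congrArg Fin.val h1
        simp only at this
        omega
      have c2 : ¬((⟨2*t+1-n, by omega⟩ : Fin (2*t+2)) = ⟨m, by omega⟩ ∧ i = i) := by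
        rintro ⟨h1, -⟩
        have := congrArg Fin.val h1
        simp only at this
        omega
      rw [if_neg c1, if_neg c2, if_neg (by rintro ⟨-, h⟩; exact hmn h)]
      simp
  · rw [if_neg (by rintro ⟨-, h⟩; exact hij h),
        if_neg (by rintro ⟨-, h⟩; exact hij h.symm),
        if_neg (by rintro ⟨h, -⟩; exact hij h)]
    simp

/-! ### centrality of MM -/

lemma E_apply (a b r s : Idx d t) :
    E a b r s = if a = r ∧ b = s then (1:ℝ) else 0 := by
  rw [E, Matrix.single]
  rfl

def Zsub (d t : ℕ) : Submodule ℝ (Mx d t) where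
  carrier := {A | (∀ r, A bot r = 0) ∧ (∀ r, A r top = 0)}
  add_mem' := by
    rintro a b ⟨ha1, ha2⟩ ⟨hb1, hb2⟩
    exact ⟨fun r => by simp [Matrix.add_apply, ha1 r, hb1 r],
           fun r => by simp [Matrix.add_apply, ha2 r, hb2 r]⟩
  zero_mem' := ⟨fun r => rfl, fun r => rfl⟩
  smul_mem' := by
    rintro c a ⟨ha1, ha2⟩
    exact ⟨fun r => by simp [Matrix.smul_apply, ha1 r],
           fun r => by simp [Matrix.smul_apply, ha2 r]⟩

lemma E_mem_Zsub (a b : Idx d t) (h1 : a ≠ bot) (h2 : b ≠ top) : E a b ∈ Zsub d t := by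
  constructor
  · intro r
    rw [E_apply, if_neg (by rintro ⟨h, -⟩; exact h1 h)]
  · intro r
    rw [E_apply, if_neg (by rintro ⟨-, h⟩; exact h2 h)]

lemma T_mem_Zsub (f : Fin (2*t+2) → ℝ) (τ : Fin (2*t+2) → Fin (2*t+2)) :
    (T f τ : Mx d t) ∈ Zsub d t := by
  rw [T_def]
  apply Submodule.sum_mem
  intro n _
  apply Submodule.sum_mem
  intro i _
  exact Submodule.smul_mem _ _ (E_mem_Zsub _ _ (md_ne_bot _) (md_ne_top _))

lemma F_mem_Zsub (a b : Fin d) : (F a b : Mx d t) ∈ Zsub d t := by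
  rw [F_def]
  apply Submodule.sum_mem
  intro n _
  exact E_mem_Zsub _ _ (md_ne_bot _) (md_ne_top _)

lemma ME_mem_Zsub (i j : Fin d) : (ME p i j : Mx d t) ∈ Zsub d t :=
  Submodule.sub_mem _ (Submodule.smul_mem _ _ (F_mem_Zsub _ _))
    (Submodule.smul_mem _ _ (F_mem_Zsub _ _))

lemma MM_mem_Zsub : (MM : Mx d t) ∈ Zsub d t :=
  E_mem_Zsub _ _ top_ne_bot bot_ne_top

lemma MP_mem_Zsub (n : ℕ) (i : Fin d) : (MP p n i : Mx d t) ∈ Zsub d t := by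
  rw [MP]
  split_ifs
  · exact Submodule.add_mem _ (E_mem_Zsub _ _ (md_ne_bot _) bot_ne_top)
      (Submodule.smul_mem _ _ (E_mem_Zsub _ _ top_ne_bot (md_ne_top _)))
  · exact Submodule.zero_mem _

lemma MM_mul_eq_zero (A : Mx d t) (h1 : ∀ r, A bot r = 0) : MM * A = 0 := by
  ext r s
  rw [Matrix.mul_apply]
  rw [Matrix.zero_apply]
  apply Finset.sum_eq_zero
  intro k _
  rw [MM, E_apply]
  by_cases hc : top = r ∧ bot = k
  · rw [if_pos hc, one_mul, ← hc.2, h1]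
  · rw [if_neg hc, zero_mul]

lemma mul_MM_eq_zero (A : Mx d t) (h2 : ∀ r, A r top = 0) : A * MM = 0 := by
  ext r s
  rw [Matrix.mul_apply]
  rw [Matrix.zero_apply]
  apply Finset.sum_eq_zero
  intro k _
  rw [MM, E_apply]
  by_cases hc : top = k ∧ bot = s
  · rw [if_pos hc, ← hc.1, h2, zero_mul]
  · rw [if_neg hc, mul_zero]

lemma lie_MM_central (A : Mx d t) (hA : A ∈ Zsub d t) : ⁅(MM : Mx d t), A⁆ = 0 := by
  rw [Ring.lie_def, MM_mul_eq_zero A hA.1, mul_MM_eq_zero A hA.2, sub_zero]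

/-! ### the span of the generators -/

noncomputable def Bfam (d t p : ℕ) : GalIdx d t → Mx d t :=
  Sum.elim (Sum.elim ![MH, MD, MC] (fun _ : Unit => MM))
    (Sum.elim (fun pr : {pr : Fin d × Fin d // pr.1 < pr.2} => ME p pr.1.1 pr.1.2)
      (fun w : Fin (2 * t + 2) × Fin d => MP p w.1 w.2))

noncomputable def Lspan (d t p : ℕ) : Submodule ℝ (Mx d t) :=
  Submodule.span ℝ (Set.range (Bfam d t p))

lemma MH_mem : (MH : Mx d t) ∈ Lspan d t p :=
  Submodule.subset_span ⟨Sum.inl (Sum.inl 0), rfl⟩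

lemma MD_mem : (MD : Mx d t) ∈ Lspan d t p :=
  Submodule.subset_span ⟨Sum.inl (Sum.inl 1), rfl⟩

lemma MC_mem : (MC : Mx d t) ∈ Lspan d t p :=
  Submodule.subset_span ⟨Sum.inl (Sum.inl 2), rfl⟩

lemma MM_mem : (MM : Mx d t) ∈ Lspan d t p :=
  Submodule.subset_span ⟨Sum.inl (Sum.inr ()), rfl⟩

lemma ME_self (i : Fin d) : (ME p i i : Mx d t) = 0 := by
  rw [ME, sub_self]

lemma ME_antisymm (i j : Fin d) : (ME p i j : Mx d t) = - ME p j i := by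
  rw [ME, ME]; abel

lemma ME_mem (i j : Fin d) : (ME p i j : Mx d t) ∈ Lspan d t p := by
  rcases lt_trichotomy i j with h | h | h
  · exact Submodule.subset_span ⟨Sum.inr (Sum.inl ⟨(i, j), h⟩), rfl⟩
  · rw [h, ME_self]; exact Submodule.zero_mem _
  · rw [ME_antisymm]
    exact Submodule.neg_mem _ (Submodule.subset_span ⟨Sum.inr (Sum.inl ⟨(j, i), h⟩), rfl⟩)

lemma MP_mem (n : ℕ) (i : Fin d) : (MP p n i : Mx d t) ∈ Lspan d t p := by
  rcases Nat.lt_or_ge (2*t+1) n with h | h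
  · rw [MP_zero n h]; exact Submodule.zero_mem _
  · exact Submodule.subset_span ⟨Sum.inr (Sum.inr (⟨n, by omega⟩, i)), rfl⟩

lemma Bfam_mem_Zsub (a : GalIdx d t) : Bfam d t p a ∈ Zsub d t := by
  rcases a with (v | u) | (e | w)
  · fin_cases v
    · exact T_mem_Zsub _ _
    · exact T_mem_Zsub _ _
    · exact T_mem_Zsub _ _
  · exact MM_mem_Zsub
  · exact ME_mem_Zsub _ _
  · exact MP_mem_Zsub _ _

lemma sl2_lie_mem (A B : Mx d t)
    (hA : A = MH ∨ A = MD ∨ A = MC) (hB : B = MH ∨ B = MD ∨ B = MC) :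
    ⁅A, B⁆ ∈ Lspan d t p := by
  have hDH : ⁅(MD : Mx d t), (MH : Mx d t)⁆ ∈ Lspan d t p := by
    rw [lie_MD_MH]; exact Submodule.smul_mem _ _ MH_mem
  have hDC : ⁅(MD : Mx d t), (MC : Mx d t)⁆ ∈ Lspan d t p := by
    rw [lie_MD_MC]; exact Submodule.smul_mem _ _ MC_mem
  have hCH : ⁅(MC : Mx d t), (MH : Mx d t)⁆ ∈ Lspan d t p := by
    rw [lie_MC_MH]; exact MD_mem
  rcases hA with rfl | rfl | rfl <;> rcases hB with rfl | rfl | rfl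
  · rw [lie_self]; exact Submodule.zero_mem _
  · rw [← lie_skew]; exact Submodule.neg_mem _ hDH
  · rw [← lie_skew]; exact Submodule.neg_mem _ hCH
  · exact hDH
  · rw [lie_self]; exact Submodule.zero_mem _
  · exact hDC
  · exact hCH
  · rw [← lie_skew]; exact Submodule.neg_mem _ hDC
  · rw [lie_self]; exact Submodule.zero_mem _

lemma sl2_lie_MP_mem (A : Mx d t) (hA : A = MH ∨ A = MD ∨ A = MC)
    (n : ℕ) (hn : n ≤ 2*t+1) (i : Fin d) : ⁅A, (MP p n i : Mx d t)⁆ ∈ Lspan d t p := by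
  rcases hA with rfl | rfl | rfl
  · rw [lie_MH_MP n hn]; exact Submodule.smul_mem _ _ (MP_mem _ _)
  · rw [lie_MD_MP n hn]; exact Submodule.smul_mem _ _ (MP_mem _ _)
  · rw [lie_MC_MP n hn]; exact Submodule.smul_mem _ _ (MP_mem _ _)

lemma lie_Bfam_mem (a b : GalIdx d t) :
    ⁅Bfam d t p a, Bfam d t p b⁆ ∈ Lspan d t p := by
  have hMM_left : ∀ c : GalIdx d t, ⁅(MM : Mx d t), Bfam d t p c⁆ ∈ Lspan d t p := by
    intro c
    rw [lie_MM_central _ (Bfam_mem_Zsub c)]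
    exact Submodule.zero_mem _
  have hMM_right : ∀ c : GalIdx d t, ⁅Bfam d t p c, (MM : Mx d t)⁆ ∈ Lspan d t p := by
    intro c
    rw [← lie_skew, lie_MM_central _ (Bfam_mem_Zsub c)]
    simpa using Submodule.zero_mem _
  have hsl2 : ∀ v : Fin 3,
      (![MH, MD, MC] v : Mx d t) = MH ∨ (![MH, MD, MC] v : Mx d t) = MD ∨
        (![MH, MD, MC] v : Mx d t) = MC := by
    intro v; fin_cases v
    · exact Or.inl rfl
    · exact Or.inr (Or.inl rfl)
    · exact Or.inr (Or.inr rfl)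
  have hT : ∀ v : Fin 3, ∃ f τ, (![MH, MD, MC] v : Mx d t) = T f τ := by
    intro v; fin_cases v
    · exact ⟨_, _, rfl⟩
    · exact ⟨_, _, rfl⟩
    · exact ⟨_, _, rfl⟩
  rcases a with (v | u) | (e | w)
  case inr.inr => -- a = MP
    rcases b with (v' | u') | (e' | w')
    · -- b sl2
      rw [← lie_skew]
      exact Submodule.neg_mem _
        (sl2_lie_MP_mem _ (hsl2 v') _ (by have := w.1.isLt; omega) _)
    · exact hMM_right _
    · rw [← lie_skew]
      refine Submodule.neg_mem _ ?_
      show ⁅(ME p e'.1.1 e'.1.2 : Mx d t), (MP p (w.1 : ℕ) w.2 : Mx d t)⁆ ∈ Lspan d t p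
      rw [lie_ME_MP _ _ _ (by have := w.1.isLt; omega)]
      exact Submodule.sub_mem _ (Submodule.smul_mem _ _ (MP_mem _ _))
        (Submodule.smul_mem _ _ (MP_mem _ _))
    · show ⁅(MP p (w.1 : ℕ) w.2 : Mx d t), (MP p (w'.1 : ℕ) w'.2 : Mx d t)⁆ ∈ Lspan d t p
      rw [lie_MP_MP _ _ (by have := w.1.isLt; omega) (by have := w'.1.isLt; omega)]
      exact Submodule.smul_mem _ _ MM_mem
  case inr.inl => -- a = ME
    rcases b with (v' | u') | (e' | w')
    · rw [← lie_skew]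
      obtain ⟨f, τ, hf⟩ := hT v'
      refine Submodule.neg_mem _ ?_
      show ⁅(![MH, MD, MC] v' : Mx d t), (ME p e.1.1 e.1.2 : Mx d t)⁆ ∈ Lspan d t p
      rw [hf, lie_T_ME]
      exact Submodule.zero_mem _
    · exact hMM_right _
    · show ⁅(ME p e.1.1 e.1.2 : Mx d t), (ME p e'.1.1 e'.1.2 : Mx d t)⁆ ∈ Lspan d t p
      rw [lie_ME_ME]
      exact Submodule.sub_mem _ (Submodule.sub_mem _
        (Submodule.add_mem _ (Submodule.smul_mem _ _ (ME_mem _ _))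
          (Submodule.smul_mem _ _ (ME_mem _ _)))
        (Submodule.smul_mem _ _ (ME_mem _ _))) (Submodule.smul_mem _ _ (ME_mem _ _))
    · show ⁅(ME p e.1.1 e.1.2 : Mx d t), (MP p (w'.1 : ℕ) w'.2 : Mx d t)⁆ ∈ Lspan d t p
      rw [lie_ME_MP _ _ _ (by have := w'.1.isLt; omega)]
      exact Submodule.sub_mem _ (Submodule.smul_mem _ _ (MP_mem _ _))
        (Submodule.smul_mem _ _ (MP_mem _ _))
  case inl.inr => exact hMM_left _
  case inl.inl => -- a sl2
    rcases b with (v' | u') | (e' | w')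
    · exact sl2_lie_mem _ _ (hsl2 v) (hsl2 v')
    · exact hMM_right _
    · obtain ⟨f, τ, hf⟩ := hT v
      show ⁅(![MH, MD, MC] v : Mx d t), (ME p e'.1.1 e'.1.2 : Mx d t)⁆ ∈ Lspan d t p
      rw [hf, lie_T_ME]
      exact Submodule.zero_mem _
    · exact sl2_lie_MP_mem _ (hsl2 v) _ (by have := w'.1.isLt; omega) _

lemma lie_mem_Lspan {x y : Mx d t} (hx : x ∈ Lspan d t p) (hy : y ∈ Lspan d t p) :
    ⁅x, y⁆ ∈ Lspan d t p := by
  refine Submodule.span_induction₂ (p := fun a b _ _ => ⁅a, b⁆ ∈ Lspan d t p) ?_ ?_ ?_ ?_ ?_ ?_ ?_ hx hy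
  · rintro x y ⟨a, rfl⟩ ⟨b, rfl⟩
    exact lie_Bfam_mem a b
  · intro y _; rw [zero_lie]; exact Submodule.zero_mem _
  · intro x _; rw [lie_zero]; exact Submodule.zero_mem _
  · intro x y z _ _ _ h1 h2; rw [add_lie]; exact Submodule.add_mem _ h1 h2
  · intro x y z _ _ _ h1 h2; rw [lie_add]; exact Submodule.add_mem _ h1 h2
  · intro r x y _ _ h1; rw [smul_lie]; exact Submodule.smul_mem _ _ h1
  · intro r x y _ _ h1; rw [lie_smul]; exact Submodule.smul_mem _ _ h1

noncomputable def GalSub (d t p : ℕ) : LieSubalgebra ℝ (Mx d t) :=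
  { Lspan d t p with
    lie_mem' := fun hx hy => lie_mem_Lspan hx hy }

/-! ### matrix entries of the generators -/

lemma T_apply (f : Fin (2*t+2) → ℝ) (τ : Fin (2*t+2) → Fin (2*t+2)) (x y : Mid d t) :
    T f τ (md x) (md y) = if (τ y.1, y.2) = x then f y.1 else 0 := by
  rw [T_def, Matrix.sum_apply, Finset.sum_eq_single y.1]
  · rw [Matrix.sum_apply, Finset.sum_eq_single y.2]
    · rw [Matrix.smul_apply, E_apply]
      by_cases h : ((τ y.1, y.2) : Mid d t) = x
      · rw [if_pos ⟨congrArg md h, rfl⟩, if_pos h, smul_eq_mul, mul_one]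
      · rw [if_neg (fun hc => h ((md_eq_md _ _).mp hc.1)), if_neg h, smul_zero]
    · intro i _ hi
      rw [Matrix.smul_apply, E_apply,
        if_neg (fun hc => hi (congrArg Prod.snd ((md_eq_md _ _).mp hc.2))), smul_zero]
    · simp
  · intro n _ hn
    rw [Matrix.sum_apply]
    apply Finset.sum_eq_zero
    intro i _
    rw [Matrix.smul_apply, E_apply,
      if_neg (fun hc => hn (congrArg Prod.fst ((md_eq_md _ _).mp hc.2))), smul_zero]
  · simp

lemma T_apply_bot (f : Fin (2*t+2) → ℝ) (τ : Fin (2*t+2) → Fin (2*t+2)) (r : Idx d t) :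
    T f τ r bot = 0 := by
  rw [T_def, Matrix.sum_apply]
  apply Finset.sum_eq_zero
  intro n _
  rw [Matrix.sum_apply]
  apply Finset.sum_eq_zero
  intro i _
  rw [Matrix.smul_apply, E_apply, if_neg (fun hc => md_ne_bot _ hc.2), smul_zero]

lemma F_apply (a b : Fin d) (x y : Mid d t) :
    F a b (md x) (md y) = if x.1 = y.1 ∧ x.2 = a ∧ y.2 = b then 1 else 0 := by
  rw [F_def, Matrix.sum_apply, Finset.sum_eq_single y.1]
  · rw [E_apply]
    by_cases h : x.1 = y.1 ∧ x.2 = a ∧ y.2 = b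
    · rw [if_pos, if_pos h]
      obtain ⟨h1, h2, h3⟩ := h
      constructor
      · apply congrArg md
        apply Prod.ext
        · exact h1.symm
        · exact h2.symm
      · apply congrArg md
        apply Prod.ext
        · rfl
        · exact h3.symm
    · rw [if_neg, if_neg h]
      rintro ⟨h1, h2⟩
      have e1 := (md_eq_md _ _).mp h1
      have e2 := (md_eq_md _ _).mp h2
      exact h ⟨(congrArg Prod.fst e1).symm, (congrArg Prod.snd e1).symm,
        (congrArg Prod.snd e2).symm⟩
  · intro n _ hn
    rw [E_apply, if_neg]
    rintro ⟨-, h2⟩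
    exact hn (congrArg Prod.fst ((md_eq_md _ _).mp h2))
  · simp

lemma F_apply_bot (a b : Fin d) (r : Idx d t) : F a b r bot = 0 := by
  rw [F_def, Matrix.sum_apply]
  apply Finset.sum_eq_zero
  intro n _
  rw [E_apply, if_neg (fun hc => md_ne_bot _ hc.2)]

lemma ME_apply_bot (i j : Fin d) (r : Idx d t) : ME p i j r bot = 0 := by
  rw [ME, Matrix.sub_apply, Matrix.smul_apply, Matrix.smul_apply,
    F_apply_bot, F_apply_bot, smul_zero, smul_zero, sub_zero]

lemma ME_apply_md (i j : Fin d) (x y : Mid d t) :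
    ME p i j (md x) (md y) =
      gsign p i * (if x.1 = y.1 ∧ x.2 = j ∧ y.2 = i then 1 else 0)
        - gsign p j * (if x.1 = y.1 ∧ x.2 = i ∧ y.2 = j then 1 else 0) := by
  rw [ME, Matrix.sub_apply, Matrix.smul_apply, Matrix.smul_apply, F_apply, F_apply,
    smul_eq_mul, smul_eq_mul]

lemma MM_apply_bot_md (x : Mid d t) : (MM : Mx d t) (md x) bot = 0 := by
  rw [MM, E_apply, if_neg (fun hc => top_ne_md _ hc.1)]

lemma MM_apply_md (x y : Mid d t) : (MM : Mx d t) (md x) (md y) = 0 := by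
  rw [MM, E_apply, if_neg (fun hc => top_ne_md _ hc.1)]

lemma MM_apply_top_bot : (MM : Mx d t) top bot = 1 := by
  rw [MM, E_apply, if_pos ⟨rfl, rfl⟩]

lemma MP_apply_md_bot (n : ℕ) (hn : n ≤ 2*t+1) (i : Fin d) (x : Mid d t) :
    (MP p n i : Mx d t) (md x) bot = if x = (⟨n, by omega⟩, i) then 1 else 0 := by
  rw [MP_eq n hn, Matrix.add_apply, Matrix.smul_apply, row, E_apply,
    if_neg (fun hc => top_ne_md _ hc.1), smul_zero, add_zero, col, E_apply]
  by_cases h : x = ((⟨n, by omega⟩, i) : Mid d t)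
  · rw [if_pos ⟨congrArg md h.symm, rfl⟩, if_pos h]
  · rw [if_neg (fun hc => h ((md_eq_md _ _).mp hc.1).symm), if_neg h]

lemma MP_apply_top_bot (n : ℕ) (i : Fin d) : (MP p n i : Mx d t) top bot = 0 := by
  rcases Nat.lt_or_ge (2*t+1) n with h | h
  · rw [MP_zero n h]; rfl
  · rw [MP_eq n h, Matrix.add_apply, Matrix.smul_apply, row, E_apply,
      if_neg (fun hc => md_ne_bot _ hc.2), col, E_apply,
      if_neg (fun hc => md_ne_top _ hc.1)]
    simp

lemma MP_apply_md_md (n : ℕ) (i : Fin d) (x y : Mid d t) :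
    (MP p n i : Mx d t) (md x) (md y) = 0 := by
  rcases Nat.lt_or_ge (2*t+1) n with h | h
  · rw [MP_zero n h]; rfl
  · rw [MP_eq n h, Matrix.add_apply, Matrix.smul_apply, row, E_apply,
      if_neg (fun hc => top_ne_md _ hc.1), col, E_apply,
      if_neg (fun hc => bot_ne_md _ hc.2)]
    simp

/-! ### linear independence of the generators -/

lemma Bfam_li (hd : 0 < d) : LinearIndependent ℝ (Bfam d t p) := by
  have hz1 : (1:ℕ) < 2*t+2 := by omega
  have hz0 : (0:ℕ) < 2*t+2 := by omega
  rw [Fintype.linearIndependent_iff]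
  intro c hc
  have hent : ∀ r s : Idx d t, (∑ a : GalIdx d t, c a * Bfam d t p a r s) = 0 := by
    intro r s
    have h1 := congrArg (fun M : Mx d t => M r s) hc
    simpa [Matrix.sum_apply, Matrix.smul_apply, smul_eq_mul] using h1
  intro a
  rcases a with (v | u) | (e | w)
  · -- sl2 generators
    fin_cases v
    · -- H : entry (md (0,i0), md (1,i0))
      have key := hent (md (⟨⟨0,hz0⟩,⟨0,hd⟩⟩)) (md (⟨⟨1,hz1⟩,⟨0,hd⟩⟩))
      rw [Finset.sum_eq_single (ι := GalIdx d t) ((Sum.inl (Sum.inl 0)) : GalIdx d t)] at key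
      · have hv : Bfam d t p (Sum.inl (Sum.inl 0)) = (MH : Mx d t) := rfl
        rw [hv, MH, T_apply, if_pos (by
          refine Prod.ext ?_ rfl
          apply Fin.ext
          show 1 - 1 = 0
          rfl)] at key
        have h3 : fH (⟨1,hz1⟩ : Fin (2*t+2)) = -1 := by
          show -((1:ℕ):ℝ) = -1; norm_num
        rw [h3] at key
        simpa using mul_eq_zero.mp key
      · intro b _ hb
        rcases b with (v' | u') | (e' | w')
        · fin_cases v'
          · exact absurd rfl hb
          · refine mul_eq_zero_of_right _ ?_
            show (MD : Mx d t) (md (⟨⟨0,hz0⟩,⟨0,hd⟩⟩)) (md (⟨⟨1,hz1⟩,⟨0,hd⟩⟩)) = 0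
            rw [MD, T_apply, if_neg (by
              intro hcc
              have h2 := congrArg Fin.val (congrArg Prod.fst hcc)
              simp only [id_eq] at h2
              exact absurd h2 (by norm_num))]
          · refine mul_eq_zero_of_right _ ?_
            show (MC : Mx d t) (md (⟨⟨0,hz0⟩,⟨0,hd⟩⟩)) (md (⟨⟨1,hz1⟩,⟨0,hd⟩⟩)) = 0
            rw [MC, T_apply, if_neg (by
              intro hcc
              have h2 := congrArg Fin.val (congrArg Prod.fst hcc)
              have h3 : min (1+1) (2*t+1) = (0:ℕ) := h2
              omega)]
        · exact mul_eq_zero_of_right _ (MM_apply_md _ _)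
        · refine mul_eq_zero_of_right _ ?_
          show (ME p e'.1.1 e'.1.2 : Mx d t)
            (md (⟨⟨0,hz0⟩,⟨0,hd⟩⟩)) (md (⟨⟨1,hz1⟩,⟨0,hd⟩⟩)) = 0
          rw [ME_apply_md, if_neg (by
              intro hcc
              have h2 := congrArg Fin.val hcc.1
              exact absurd h2 (by norm_num)), if_neg (by
              intro hcc
              have h2 := congrArg Fin.val hcc.1
              exact absurd h2 (by norm_num))]
          simp
        · exact mul_eq_zero_of_right _ (MP_apply_md_md _ _ _ _)
      · intro h; exact absurd (Finset.mem_univ _) h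
    · -- D : entry (md (0,i0), md (0,i0))
      have key := hent (md (⟨⟨0,hz0⟩,⟨0,hd⟩⟩)) (md (⟨⟨0,hz0⟩,⟨0,hd⟩⟩))
      rw [Finset.sum_eq_single (ι := GalIdx d t) ((Sum.inl (Sum.inl 1)) : GalIdx d t)] at key
      · have hv : Bfam d t p (Sum.inl (Sum.inl 1)) = (MD : Mx d t) := rfl
        rw [hv, MD, T_apply, if_pos (by rfl)] at key
        have h3 : fD (⟨0,hz0⟩ : Fin (2*t+2)) = 2*t+1 := by
          show (2*t+1:ℝ) - 2*((0:ℕ):ℝ) = _; norm_num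
        rw [h3] at key
        rcases mul_eq_zero.mp key with h2 | h2
        · exact h2
        · exfalso
          have h4 : (0:ℝ) < 2*t+1 := by positivity
          rw [h2] at h4
          exact lt_irrefl _ h4
      · intro b _ hb
        rcases b with (v' | u') | (e' | w')
        · fin_cases v'
          · refine mul_eq_zero_of_right _ ?_
            show (MH : Mx d t) (md (⟨⟨0,hz0⟩,⟨0,hd⟩⟩)) (md (⟨⟨0,hz0⟩,⟨0,hd⟩⟩)) = 0
            rw [MH, T_apply]
            have h3 : fH (⟨0,hz0⟩ : Fin (2*t+2)) = 0 := by
              show -((0:ℕ):ℝ) = 0; norm_num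
            rw [h3, ite_self]
          · exact absurd rfl hb
          · refine mul_eq_zero_of_right _ ?_
            show (MC : Mx d t) (md (⟨⟨0,hz0⟩,⟨0,hd⟩⟩)) (md (⟨⟨0,hz0⟩,⟨0,hd⟩⟩)) = 0
            rw [MC, T_apply, if_neg (by
              intro hcc
              have h2 := congrArg Fin.val (congrArg Prod.fst hcc)
              have h3 : min (0+1) (2*t+1) = (0:ℕ) := h2
              omega)]
        · exact mul_eq_zero_of_right _ (MM_apply_md _ _)
        · refine mul_eq_zero_of_right _ ?_
          show (ME p e'.1.1 e'.1.2 : Mx d t)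
            (md (⟨⟨0,hz0⟩,⟨0,hd⟩⟩)) (md (⟨⟨0,hz0⟩,⟨0,hd⟩⟩)) = 0
          have hne := ne_of_lt e'.2
          rw [ME_apply_md, if_neg (by
              rintro ⟨-, h1, h2⟩
              exact hne (h2.symm.trans h1)), if_neg (by
              rintro ⟨-, h1, h2⟩
              exact hne (h1.symm.trans h2))]
          simp
        · exact mul_eq_zero_of_right _ (MP_apply_md_md _ _ _ _)
      · intro h; exact absurd (Finset.mem_univ _) h
    · -- C : entry (md (1,i0), md (0,i0))
      have key := hent (md (⟨⟨1,hz1⟩,⟨0,hd⟩⟩)) (md (⟨⟨0,hz0⟩,⟨0,hd⟩⟩))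
      rw [Finset.sum_eq_single (ι := GalIdx d t) ((Sum.inl (Sum.inl 2)) : GalIdx d t)] at key
      · have hv : Bfam d t p (Sum.inl (Sum.inl 2)) = (MC : Mx d t) := rfl
        rw [hv, MC, T_apply, if_pos (by
          refine Prod.ext ?_ rfl
          apply Fin.ext
          show min (0+1) (2*t+1) = 1
          omega)] at key
        have h3 : fC (⟨0,hz0⟩ : Fin (2*t+2)) = 2*t+1 := by
          show (2*t+1:ℝ) - ((0:ℕ):ℝ) = _; norm_num
        rw [h3] at key
        rcases mul_eq_zero.mp key with h2 | h2
        · exact h2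
        · exfalso
          have h4 : (0:ℝ) < 2*t+1 := by positivity
          rw [h2] at h4
          exact lt_irrefl _ h4
      · intro b _ hb
        rcases b with (v' | u') | (e' | w')
        · fin_cases v'
          · refine mul_eq_zero_of_right _ ?_
            show (MH : Mx d t) (md (⟨⟨1,hz1⟩,⟨0,hd⟩⟩)) (md (⟨⟨0,hz0⟩,⟨0,hd⟩⟩)) = 0
            rw [MH, T_apply, if_neg (by
              intro hcc
              have h2 := congrArg Fin.val (congrArg Prod.fst hcc)
              have h3 : (0:ℕ) - 1 = 1 := h2
              omega)]
          · refine mul_eq_zero_of_right _ ?_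
            show (MD : Mx d t) (md (⟨⟨1,hz1⟩,⟨0,hd⟩⟩)) (md (⟨⟨0,hz0⟩,⟨0,hd⟩⟩)) = 0
            rw [MD, T_apply, if_neg (by
              intro hcc
              have h2 := congrArg Fin.val (congrArg Prod.fst hcc)
              simp only [id_eq] at h2
              exact absurd h2 (by norm_num))]
          · exact absurd rfl hb
        · exact mul_eq_zero_of_right _ (MM_apply_md _ _)
        · refine mul_eq_zero_of_right _ ?_
          show (ME p e'.1.1 e'.1.2 : Mx d t)
            (md (⟨⟨1,hz1⟩,⟨0,hd⟩⟩)) (md (⟨⟨0,hz0⟩,⟨0,hd⟩⟩)) = 0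
          rw [ME_apply_md, if_neg (by
              intro hcc
              have h2 := congrArg Fin.val hcc.1
              exact absurd h2 (by norm_num)), if_neg (by
              intro hcc
              have h2 := congrArg Fin.val hcc.1
              exact absurd h2 (by norm_num))]
          simp
        · exact mul_eq_zero_of_right _ (MP_apply_md_md _ _ _ _)
      · intro h; exact absurd (Finset.mem_univ _) h
  · -- M : entry (top, bot)
    have key := hent top bot
    rw [Finset.sum_eq_single (ι := GalIdx d t) ((Sum.inl (Sum.inr ())) : GalIdx d t)] at key
    · have hv : Bfam d t p (Sum.inl (Sum.inr ())) = (MM : Mx d t) := rfl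
      rw [hv, MM_apply_top_bot, mul_one] at key
      exact key
    · intro b _ hb
      rcases b with (v' | u') | (e' | w')
      · fin_cases v'
        · exact mul_eq_zero_of_right _ (T_apply_bot _ _ _)
        · exact mul_eq_zero_of_right _ (T_apply_bot _ _ _)
        · exact mul_eq_zero_of_right _ (T_apply_bot _ _ _)
      · exact absurd rfl hb
      · exact mul_eq_zero_of_right _ (ME_apply_bot _ _ _)
      · exact mul_eq_zero_of_right _ (MP_apply_top_bot _ _)
    · intro h; exact absurd (Finset.mem_univ _) h
  · -- E generators : entry (md (0, j), md (0, i))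
    have hne := ne_of_lt e.2
    have key := hent (md (⟨⟨0,hz0⟩, e.1.2⟩)) (md (⟨⟨0,hz0⟩, e.1.1⟩))
    rw [Finset.sum_eq_single (ι := GalIdx d t) ((Sum.inr (Sum.inl e)) : GalIdx d t)] at key
    · have hv : Bfam d t p (Sum.inr (Sum.inl e)) = (ME p e.1.1 e.1.2 : Mx d t) := rfl
      rw [hv, ME_apply_md, if_pos ⟨rfl, rfl, rfl⟩, if_neg (by
        rintro ⟨-, h1, -⟩
        exact hne h1.symm)] at key
      rw [mul_one, mul_zero, sub_zero] at key
      rcases mul_eq_zero.mp key with h2 | h2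
      · exact h2
      · exact absurd h2 (gsign_ne_zero _)
    · intro b _ hb
      rcases b with (v' | u') | (e' | w')
      · fin_cases v'
        · refine mul_eq_zero_of_right _ ?_
          show (MH : Mx d t) (md (⟨⟨0,hz0⟩, e.1.2⟩)) (md (⟨⟨0,hz0⟩, e.1.1⟩)) = 0
          rw [MH, T_apply, if_neg (fun hcc => hne (congrArg Prod.snd hcc))]
        · refine mul_eq_zero_of_right _ ?_
          show (MD : Mx d t) (md (⟨⟨0,hz0⟩, e.1.2⟩)) (md (⟨⟨0,hz0⟩, e.1.1⟩)) = 0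
          rw [MD, T_apply, if_neg (fun hcc => hne (congrArg Prod.snd hcc))]
        · refine mul_eq_zero_of_right _ ?_
          show (MC : Mx d t) (md (⟨⟨0,hz0⟩, e.1.2⟩)) (md (⟨⟨0,hz0⟩, e.1.1⟩)) = 0
          rw [MC, T_apply, if_neg (fun hcc => hne (congrArg Prod.snd hcc))]
      · exact mul_eq_zero_of_right _ (MM_apply_md _ _)
      · refine mul_eq_zero_of_right _ ?_
        show (ME p e'.1.1 e'.1.2 : Mx d t)
          (md (⟨⟨0,hz0⟩, e.1.2⟩)) (md (⟨⟨0,hz0⟩, e.1.1⟩)) = 0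
        rw [ME_apply_md, if_neg (by
            rintro ⟨-, h1, h2⟩
            exact hb (by
              apply congrArg Sum.inr
              apply congrArg Sum.inl
              apply Subtype.ext
              exact Prod.ext h2.symm h1.symm)), if_neg (by
            rintro ⟨-, h1, h2⟩
            exact lt_irrefl e.1.1 (((e.2.trans_eq h1).trans e'.2).trans_eq h2.symm))]
        simp
      · exact mul_eq_zero_of_right _ (MP_apply_md_md _ _ _ _)
    · intro h; exact absurd (Finset.mem_univ _) h
  · -- P generators : entry (md w, bot)
    have key := hent (md w) bot
    rw [Finset.sum_eq_single (ι := GalIdx d t) ((Sum.inr (Sum.inr w)) : GalIdx d t)] at key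
    · have hv : Bfam d t p (Sum.inr (Sum.inr w)) = (MP p w.1 w.2 : Mx d t) := rfl
      rw [hv, MP_apply_md_bot _ (by have := w.1.isLt; omega), if_pos (by
        apply Prod.ext
        · apply Fin.ext; rfl
        · rfl), mul_one] at key
      exact key
    · intro b _ hb
      rcases b with (v' | u') | (e' | w')
      · fin_cases v'
        · exact mul_eq_zero_of_right _ (T_apply_bot _ _ _)
        · exact mul_eq_zero_of_right _ (T_apply_bot _ _ _)
        · exact mul_eq_zero_of_right _ (T_apply_bot _ _ _)
      · exact mul_eq_zero_of_right _ (MM_apply_bot_md _)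
      · exact mul_eq_zero_of_right _ (ME_apply_bot _ _ _)
      · refine mul_eq_zero_of_right _ ?_
        show (MP p w'.1 w'.2 : Mx d t) (md w) bot = 0
        rw [MP_apply_md_bot _ (by have := w'.1.isLt; omega), if_neg (by
          intro hcc
          apply hb
          apply congrArg Sum.inr
          apply congrArg Sum.inr
          rw [hcc])]
    · intro h; exact absurd (Finset.mem_univ _) h

/-! ### cardinality -/

def pairEquiv (d : ℕ) : {pr : Fin d × Fin d // pr.1 < pr.2} ≃ (Σ j : Fin d, Fin j.1) where
  toFun x := ⟨x.1.2, ⟨x.1.1.1, x.2⟩⟩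
  invFun y := ⟨(⟨y.2.1, lt_trans y.2.2 y.1.2⟩, y.1), y.2.2⟩
  left_inv x := rfl
  right_inv y := rfl

lemma card_pairs (d : ℕ) :
    Fintype.card {pr : Fin d × Fin d // pr.1 < pr.2} = d * (d-1) / 2 := by
  rw [Fintype.card_congr (pairEquiv d), Fintype.card_sigma]
  have h1 : ∀ j : Fin d, Fintype.card (Fin (j.1)) = j.1 := fun j => Fintype.card_fin _
  rw [Finset.sum_congr rfl fun j _ => h1 j]
  rw [Fin.sum_univ_eq_sum_range (fun i => i) d]
  have h2 := Finset.sum_range_id_mul_two d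
  omega

lemma card_galIdx (d t : ℕ) :
    Fintype.card (GalIdx d t) = 4 + d * (d-1) / 2 + (2*t+2) * d := by
  show Fintype.card ((Fin 3 ⊕ Unit) ⊕
    ({pr : Fin d × Fin d // pr.1 < pr.2} ⊕ (Fin (2 * t + 2) × Fin d))) = _
  rw [Fintype.card_sum, Fintype.card_sum, Fintype.card_sum, Fintype.card_prod,
    Fintype.card_fin, Fintype.card_fin, Fintype.card_unit, Fintype.card_fin, card_pairs]
  omega

/-! ### the basis family inside the subalgebra -/

noncomputable def famL (d t p : ℕ) : GalIdx d t → (GalSub d t p) :=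
  fun a => ⟨Bfam d t p a, Submodule.subset_span ⟨a, rfl⟩⟩

lemma famL_li (d t p : ℕ) (hd : 0 < d) : LinearIndependent ℝ (famL d t p) := by
  apply LinearIndependent.of_comp ((GalSub d t p).toSubmodule.subtype)
  have : ((GalSub d t p).toSubmodule.subtype) ∘ (famL d t p) = Bfam d t p := rfl
  rw [this]
  exact Bfam_li hd

lemma famL_span (d t p : ℕ) :
    Submodule.span ℝ (Set.range (famL d t p)) = ⊤ := by
  apply Submodule.map_injective_of_injective
    (Submodule.injective_subtype (GalSub d t p).toSubmodule)
  rw [Submodule.map_span, Submodule.map_top, Submodule.range_subtype]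
  rw [← Set.range_comp]
  have : ((GalSub d t p).toSubmodule.subtype) ∘ (famL d t p) = Bfam d t p := rfl
  rw [this]
  rfl

lemma finrank_GalSub (d t p : ℕ) (hd : 0 < d) :
    Module.finrank ℝ (GalSub d t p) = 4 + d * (d-1) / 2 + (2*t+2) * d := by
  have b : Module.Basis (GalIdx d t) ℝ (GalSub d t p) :=
    Module.Basis.mk (famL_li d t p hd) (by rw [famL_span d t p])
  rw [Module.finrank_eq_card_basis b, card_galIdx]

lemma Lspan_le_Zsub (d t p : ℕ) : Lspan d t p ≤ Zsub d t := by
  rw [Lspan, Submodule.span_le]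
  rintro x ⟨a, rfl⟩
  exact Bfam_mem_Zsub a

end Gal

/-- For `d = p + q ≥ 3` and half-integer `ℓ = t + 1/2 ≥ 1/2`, the bracket
relations of the generalized conformal pseudo-Galilean algebra `Gal_ℓ(p,q)` satisfy the
Jacobi identity, hence define a Lie algebra of dimension `4 + d(d-1)/2 + (2ℓ+1)d`:
there exists a real Lie algebra with a basis of generators `H, D, C, M, E_{ij}, P_{n,i}`
realizing exactly these relations. -/
theorem stmt5 (d t p q : ℕ) (hd : 3 ≤ d) (hpq : p + q = d) :
    ∃ (L : Type) (_ : LieRing L) (_ : LieAlgebra ℝ L)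
      (XH XD XC XM : L) (XE : Fin d → Fin d → L) (XP : ℕ → Fin d → L),
      (∀ i j, XE i j = - XE j i) ∧
      (∀ n, 2 * t + 1 < n → ∀ i, XP n i = 0) ∧
      -- sl(2,ℝ) relations
      ⁅XD, XH⁆ = (2 : ℝ) • XH ∧ ⁅XD, XC⁆ = (-2 : ℝ) • XC ∧ ⁅XC, XH⁆ = XD ∧
      -- action of sl(2,ℝ) on the P's
      (∀ n ≤ 2 * t + 1, ∀ i, ⁅XH, XP n i⁆ = (-(n : ℝ)) • XP (n - 1) i) ∧
      (∀ n ≤ 2 * t + 1, ∀ i,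
        ⁅XD, XP n i⁆ = ((2 * t + 1 : ℝ) - 2 * n) • XP n i) ∧
      (∀ n ≤ 2 * t + 1, ∀ i,
        ⁅XC, XP n i⁆ = ((2 * t + 1 : ℝ) - n) • XP (n + 1) i) ∧
      -- action of so(p,q) on the P's
      (∀ (i j : Fin d) (n : ℕ), n ≤ 2 * t + 1 → ∀ k,
        ⁅XE i j, XP n k⁆ = (if k = i then (if (i : ℕ) < p then (1:ℝ) else -1) else 0) • XP n j
          - (if k = j then (if (j : ℕ) < p then (1:ℝ) else -1) else 0) • XP n i) ∧
      -- so(p,q) relations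
      (∀ i j k l : Fin d,
        ⁅XE i j, XE k l⁆ =
          (if i = k then (if (i : ℕ) < p then (1:ℝ) else -1) else 0) • XE j l
          + (if j = l then (if (j : ℕ) < p then (1:ℝ) else -1) else 0) • XE i k
          - (if i = l then (if (i : ℕ) < p then (1:ℝ) else -1) else 0) • XE j k
          - (if j = k then (if (j : ℕ) < p then (1:ℝ) else -1) else 0) • XE i l) ∧
      -- Heisenberg relations
      (∀ m ≤ 2 * t + 1, ∀ n ≤ 2 * t + 1, ∀ i j,
        ⁅XP m i, XP n j⁆ =
          (if i = j ∧ m + n = 2 * t + 1 then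
            (if (i : ℕ) < p then (1:ℝ) else -1) * (-1 : ℝ) ^ (m + t + 1)
              * (2 * t + 1 - m).factorial * m.factorial
          else 0) • XM) ∧
      -- M is central
      (∀ x : L, ⁅XM, x⁆ = 0) ∧
      -- the generators form a basis
      LinearIndependent ℝ
        (Sum.elim (Sum.elim ![XH, XD, XC] (fun _ : Unit => XM))
          (Sum.elim (fun pr : {pr : Fin d × Fin d // pr.1 < pr.2} => XE pr.1.1 pr.1.2)
            (fun w : Fin (2 * t + 2) × Fin d => XP w.1 w.2)) : GalIdx d t → L) ∧
      Submodule.span ℝ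
        (Set.range (Sum.elim (Sum.elim ![XH, XD, XC] (fun _ : Unit => XM))
          (Sum.elim (fun pr : {pr : Fin d × Fin d // pr.1 < pr.2} => XE pr.1.1 pr.1.2)
            (fun w : Fin (2 * t + 2) × Fin d => XP w.1 w.2)) : GalIdx d t → L)) = ⊤ ∧
      Module.finrank ℝ L = 4 + d * (d - 1) / 2 + (2 * t + 2) * d := by
  have hd0 : 0 < d := by omega
  refine ⟨↥(Gal.GalSub d t p), inferInstance, inferInstance,
    ⟨Gal.MH, Gal.MH_mem⟩, ⟨Gal.MD, Gal.MD_mem⟩, ⟨Gal.MC, Gal.MC_mem⟩, ⟨Gal.MM, Gal.MM_mem⟩,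
    (fun i j => ⟨Gal.ME p i j, Gal.ME_mem i j⟩),
    (fun n i => ⟨Gal.MP p n i, Gal.MP_mem n i⟩),
    ?_, ?_, ?_, ?_, ?_, ?_, ?_, ?_, ?_, ?_, ?_, ?_, ?_, ?_, ?_⟩
  · intro i j
    apply Subtype.ext
    show Gal.ME p i j = -(Gal.ME p j i)
    exact Gal.ME_antisymm i j
  · intro n hn i
    apply Subtype.ext
    show Gal.MP p n i = 0
    exact Gal.MP_zero n hn i
  · apply Subtype.ext
    show ⁅(Gal.MD : Gal.Mx d t), (Gal.MH : Gal.Mx d t)⁆ = (2:ℝ) • Gal.MH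
    exact Gal.lie_MD_MH
  · apply Subtype.ext
    show ⁅(Gal.MD : Gal.Mx d t), (Gal.MC : Gal.Mx d t)⁆ = (-2:ℝ) • Gal.MC
    exact Gal.lie_MD_MC
  · apply Subtype.ext
    show ⁅(Gal.MC : Gal.Mx d t), (Gal.MH : Gal.Mx d t)⁆ = Gal.MD
    exact Gal.lie_MC_MH
  · intro n hn i
    apply Subtype.ext
    show ⁅(Gal.MH : Gal.Mx d t), (Gal.MP p n i : Gal.Mx d t)⁆ = (-(n:ℝ)) • Gal.MP p (n-1) i
    exact Gal.lie_MH_MP n hn i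
  · intro n hn i
    apply Subtype.ext
    show ⁅(Gal.MD : Gal.Mx d t), (Gal.MP p n i : Gal.Mx d t)⁆
      = ((2*t+1:ℝ) - 2*n) • Gal.MP p n i
    exact Gal.lie_MD_MP n hn i
  · intro n hn i
    apply Subtype.ext
    show ⁅(Gal.MC : Gal.Mx d t), (Gal.MP p n i : Gal.Mx d t)⁆
      = ((2*t+1:ℝ) - n) • Gal.MP p (n+1) i
    exact Gal.lie_MC_MP n hn i
  · intro i j n hn k
    apply Subtype.ext
    show ⁅(Gal.ME p i j : Gal.Mx d t), (Gal.MP p n k : Gal.Mx d t)⁆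
      = (if k = i then (if (i : ℕ) < p then (1:ℝ) else -1) else 0) • Gal.MP p n j
        - (if k = j then (if (j : ℕ) < p then (1:ℝ) else -1) else 0) • Gal.MP p n i
    rw [Gal.lie_ME_MP i j n hn k]
    rfl
  · intro i j k l
    apply Subtype.ext
    show ⁅(Gal.ME p i j : Gal.Mx d t), (Gal.ME p k l : Gal.Mx d t)⁆
      = (if i = k then (if (i : ℕ) < p then (1:ℝ) else -1) else 0) • Gal.ME p j l
        + (if j = l then (if (j : ℕ) < p then (1:ℝ) else -1) else 0) • Gal.ME p i k
        - (if i = l then (if (i : ℕ) < p then (1:ℝ) else -1) else 0) • Gal.ME p j k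
        - (if j = k then (if (j : ℕ) < p then (1:ℝ) else -1) else 0) • Gal.ME p i l
    rw [Gal.lie_ME_ME i j k l]
    rfl
  · intro m hm n hn i j
    apply Subtype.ext
    show ⁅(Gal.MP p m i : Gal.Mx d t), (Gal.MP p n j : Gal.Mx d t)⁆
      = (if i = j ∧ m + n = 2 * t + 1 then
          (if (i : ℕ) < p then (1:ℝ) else -1) * (-1 : ℝ) ^ (m + t + 1)
            * (2 * t + 1 - m).factorial * m.factorial
        else 0) • Gal.MM
    rw [Gal.lie_MP_MP m n hm hn i j]
    rfl
  · intro x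
    apply Subtype.ext
    show ⁅(Gal.MM : Gal.Mx d t), (x : Gal.Mx d t)⁆ = 0
    exact Gal.lie_MM_central _ (Gal.Lspan_le_Zsub d t p x.2)
  · have hfam : (Sum.elim (Sum.elim ![⟨Gal.MH, Gal.MH_mem⟩, ⟨Gal.MD, Gal.MD_mem⟩,
        ⟨Gal.MC, Gal.MC_mem⟩] (fun _ : Unit => ⟨Gal.MM, Gal.MM_mem⟩))
        (Sum.elim (fun pr : {pr : Fin d × Fin d // pr.1 < pr.2} =>
            ⟨Gal.ME p pr.1.1 pr.1.2, Gal.ME_mem pr.1.1 pr.1.2⟩)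
          (fun w : Fin (2 * t + 2) × Fin d =>
            ⟨Gal.MP p w.1 w.2, Gal.MP_mem w.1 w.2⟩)) : GalIdx d t → (Gal.GalSub d t p))
        = Gal.famL d t p := by
      funext a
      rcases a with (v | u) | (e | w)
      · fin_cases v <;> rfl
      · rfl
      · rfl
      · rfl
    rw [hfam]
    exact Gal.famL_li d t p hd0
  · have hfam : (Sum.elim (Sum.elim ![⟨Gal.MH, Gal.MH_mem⟩, ⟨Gal.MD, Gal.MD_mem⟩,
        ⟨Gal.MC, Gal.MC_mem⟩] (fun _ : Unit => ⟨Gal.MM, Gal.MM_mem⟩))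
        (Sum.elim (fun pr : {pr : Fin d × Fin d // pr.1 < pr.2} =>
            ⟨Gal.ME p pr.1.1 pr.1.2, Gal.ME_mem pr.1.1 pr.1.2⟩)
          (fun w : Fin (2 * t + 2) × Fin d =>
            ⟨Gal.MP p w.1 w.2, Gal.MP_mem w.1 w.2⟩)) : GalIdx d t → (Gal.GalSub d t p))
        = Gal.famL d t p := by
      funext a
      rcases a with (v | u) | (e | w)
      · fin_cases v <;> rfl
      · rfl
      · rfl
      · rfl
    rw [hfam]
    exact Gal.famL_span d t p
  · exact Gal.finrank_GalSub d t p hd0
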